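/- arXiv:2004.08220 — 3 statements merged into one kernel-verified Lean document; each statement's English description precedes it below -/
import Mathlib

section
/- Let X_t and X_{t'} be jointly distributed finite random vectors with n components each. Assume Un^(k) satisfies the source data-processing inequality (Un^(k)(W;Y|X) ≤ Un^(k)(Z;Y|X) whenever W−Z−(X,Y) is a Markov chain) and the self-unique identity Un^(k)(X;Y|X) = Syn^(k)(X;Y). Then for every supervenient feature V_t one has Un^(k)(V_t;X_{t'}|X_t) ≤ Syn^(k)(X_t;X_{t'}); in particular Syn^(k)(X_t;X_{t'}) upper-bounds the unique information of all possible supervenient features (the emergence capacity of the system). -/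
/-!
Framework: finite probability.  A finite sample space `Ω` carries a probability
mass function `μ : Ω → ℝ`; random variables are functions on `Ω`.
-/

noncomputable section

open scoped BigOperators

attribute [local instance] Classical.propDecidable

variable {Ω : Type} [Fintype Ω]

/-- The probability that the random variable `f` takes the value `a`, under the pmf `μ`. -/
def prEq (μ : Ω → ℝ) {A : Type} (f : Ω → A) (a : A) : ℝ :=
  ∑ ω, if f ω = a then μ ω else 0

/-- `μ` is a probability mass function on the finite sample space `Ω`. -/
def IsPMF (μ : Ω → ℝ) : Prop :=
  (∀ ω, 0 ≤ μ ω) ∧ ∑ ω, μ ω = 1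

/-- The Markov chain `f − g − h`: `f` and `h` are conditionally independent given `g`. -/
def MarkovChain (μ : Ω → ℝ) {A B C : Type} (f : Ω → A) (g : Ω → B) (h : Ω → C) : Prop :=
  ∀ a b c,
    prEq μ (fun ω => (f ω, g ω, h ω)) (a, b, c) * prEq μ g b =
      prEq μ (fun ω => (f ω, g ω)) (a, b) * prEq μ (fun ω => (g ω, h ω)) (b, c)

/-- Statistical independence of two random variables. -/
def IndepRV (μ : Ω → ℝ) {A B : Type} (f : Ω → A) (g : Ω → B) : Prop :=
  ∀ a b, prEq μ (fun ω => (f ω, g ω)) (a, b) = prEq μ f a * prEq μ g b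

/-- Shannon mutual information `I(f;g)`. -/
def mutInfo (μ : Ω → ℝ) {A B : Type} (f : Ω → A) (g : Ω → B) : ℝ :=
  ∑ a ∈ Finset.univ.image f, ∑ b ∈ Finset.univ.image g,
    prEq μ (fun ω => (f ω, g ω)) (a, b) *
      Real.log (prEq μ (fun ω => (f ω, g ω)) (a, b) / (prEq μ f a * prEq μ g b))

/-- Conditional mutual information `I(f;g|h)`. -/
def condMutInfo (μ : Ω → ℝ) {A B C : Type} (f : Ω → A) (g : Ω → B) (h : Ω → C) : ℝ :=
  ∑ a ∈ Finset.univ.image f, ∑ b ∈ Finset.univ.image g, ∑ c ∈ Finset.univ.image h,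
    prEq μ (fun ω => (f ω, g ω, h ω)) (a, b, c) *
      Real.log ((prEq μ h c * prEq μ (fun ω => (f ω, g ω, h ω)) (a, b, c)) /
        (prEq μ (fun ω => (f ω, h ω)) (a, c) * prEq μ (fun ω => (g ω, h ω)) (b, c)))

/-- Conditional entropy `H(f|g)`. -/
def condEntropyRV (μ : Ω → ℝ) {A B : Type} (f : Ω → A) (g : Ω → B) : ℝ :=
  -∑ a ∈ Finset.univ.image f, ∑ b ∈ Finset.univ.image g,
    prEq μ (fun ω => (f ω, g ω)) (a, b) *
      Real.log (prEq μ (fun ω => (f ω, g ω)) (a, b) / prEq μ g b)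

/-- The sub-vector `X^α` of the random vector `X`, for a set of indices `α ⊆ [n]`. -/
def subvec {n : ℕ} {𝓧 : Fin n → Type} (X : Ω → ∀ i, 𝓧 i) (α : Finset (Fin n)) :
    Ω → ∀ i : α, 𝓧 i :=
  fun ω i => X ω i

/-- The collection of all subsets of `[n]` of cardinality `k`. -/
def kSets (n k : ℕ) : Finset (Finset (Fin n)) :=
  Finset.univ.filter fun α => α.card = k

/-!
STATEMENT 1.  `Syn⁽ᵏ⁾(X_t;X_{t'})` upper-bounds the unique information of every
supervenient feature: for every supervenient `V_t`,
`Un⁽ᵏ⁾(V_t; X_{t'} | X_t) ≤ Syn⁽ᵏ⁾(X_t; X_{t'})` (the emergence capacity of the system).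

Abstract PID quantities as in Statement 0:  `Un V f = Un⁽ᵏ⁾(f ; X_{t'} | X_t)` and
`Syn = Syn⁽ᵏ⁾(X_t ; X_{t'})`; assumed: source data-processing inequality and the
self-unique identity.
-/

lemma prEq_congr {Ω : Type} [Fintype Ω] (μ : Ω → ℝ) {A B : Type}
    (f : Ω → A) (g : Ω → B) (a : A) (b : B)
    (h : ∀ ω, f ω = a ↔ g ω = b) : prEq μ f a = prEq μ g b := by
  unfold prEq
  exact Finset.sum_congr rfl fun ω _ => by rw [if_congr (h ω) rfl rfl]

lemma prEq_zero {Ω : Type} [Fintype Ω] (μ : Ω → ℝ) {A : Type}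
    (f : Ω → A) (a : A) (h : ∀ ω, f ω ≠ a) : prEq μ f a = 0 := by
  unfold prEq
  exact Finset.sum_eq_zero fun ω _ => if_neg (h ω)

theorem synergy_bounds_unique_info_of_supervenient
    {Ω : Type} [Fintype Ω] (μ : Ω → ℝ) (hμ : IsPMF μ)
    {n : ℕ} {𝓧 𝓨 : Fin n → Type} [∀ i, Fintype (𝓧 i)] [∀ i, Fintype (𝓨 i)]
    (X : Ω → ∀ i, 𝓧 i) (X' : Ω → ∀ i, 𝓨 i)
    (k : ℕ)
    (Un : (V : Type) → (Ω → V) → ℝ)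
    (Syn : ℝ)
    (hUn_dpi : ∀ (W Z : Type) (f : Ω → W) (g : Ω → Z),
      MarkovChain μ f g (fun ω => (X ω, X' ω)) → Un W f ≤ Un Z g)
    (hself : Un (∀ i, 𝓧 i) X = Syn) :
    ∀ (V : Type) (_ : Fintype V) (f : Ω → V),
      MarkovChain μ f X X' → Un V f ≤ Syn := by
  intro V _ f hmc
  have h : MarkovChain μ f X (fun ω => (X ω, X' ω)) := by
    intro a b bc
    obtain ⟨b', c⟩ := bc
    by_cases hb : b' = b
    · subst hb
      have e1 : prEq μ (fun ω => (f ω, X ω, X ω, X' ω)) (a, b', b', c)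
          = prEq μ (fun ω => (f ω, X ω, X' ω)) (a, b', c) := by
        apply prEq_congr; intro ω; constructor <;> intro h <;>
          simp_all [Prod.ext_iff]
      have e2 : prEq μ (fun ω => (X ω, X ω, X' ω)) (b', b', c)
          = prEq μ (fun ω => (X ω, X' ω)) (b', c) := by
        apply prEq_congr; intro ω; constructor <;> intro h <;>
          simp_all [Prod.ext_iff]
      rw [e1, e2]; exact hmc a b' c
    · have e1 : prEq μ (fun ω => (f ω, X ω, X ω, X' ω)) (a, b, b', c) = 0 := by
        apply prEq_zero; intro ω h
        simp only [Prod.mk.injEq] at h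
        exact hb (h.2.2.1.symm.trans h.2.1)
      have e2 : prEq μ (fun ω => (X ω, X ω, X' ω)) (b, b', c) = 0 := by
        apply prEq_zero; intro ω h
        simp only [Prod.mk.injEq] at h
        exact hb (h.2.1.symm.trans h.1)
      rw [e1, e2]; ring
  calc Un V f ≤ Un (∀ i, 𝓧 i) X := hUn_dpi V (∀ i, 𝓧 i) f X h
    _ = Syn := hself
end
end

section
/- Let X_t and X_{t'} be jointly distributed finite random vectors with n components each, let V_t be supervenient on X_t and V_{t'} supervenient on X_{t'}, with V_t−X_t−X_{t'}−V_{t'} a Markov chain. Define Ψ^(k) := I(V_t;V_{t'}) − Σ_{α⊆[n],|α|=k} I(X_t^α;V_{t'}). Assume: (whole-minus-sum) Syn^(k)(X;Y) ≥ I(X;Y) − Σ_{|α|=k} I(X^α;Y); and (target data-processing inequality) Syn^(k)(X;U) ≤ Syn^(k)(X;Y) whenever X−Y−U is a Markov chain. Then Ψ^(k) ≤ Syn^(k)(X_t;X_{t'}); consequently Ψ^(k) > 0 is a sufficient condition for causal emergence of order k (i.e. it implies Syn^(k)(X_t;X_{t'}) > 0). -/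
/-!
Framework: finite probability.  A finite sample space `Ω` carries a probability
mass function `μ : Ω → ℝ`; random variables are functions on `Ω`.
-/

noncomputable section

open scoped BigOperators

attribute [local instance] Classical.propDecidable

variable {Ω : Type} [Fintype Ω]

/-!
STATEMENT 5.  With `Ψ⁽ᵏ⁾ := I(V_t;V_{t'}) − Σ_{|α|=k} I(X_t^α;V_{t'})`, assuming the
whole-minus-sum property of `Syn⁽ᵏ⁾` and the target data-processing inequality,
one has `Ψ⁽ᵏ⁾ ≤ Syn⁽ᵏ⁾(X_t;X_{t'})`; consequently `Ψ⁽ᵏ⁾ > 0` implies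
`Syn⁽ᵏ⁾(X_t;X_{t'}) > 0` (causal emergence of order `k`).

`V` is supervenient on `X = X_t` and `V'` on `X' = X_{t'}`, with
`V − X_t − X_{t'} − V'` a Markov chain.  `Syn T t` stands for `Syn⁽ᵏ⁾(X_t ; t)`.
-/

/-! ### Auxiliary lemmas -/

section Aux

lemma prEq_nonneg {μ : Ω → ℝ} (hμ : ∀ ω, 0 ≤ μ ω) {A : Type} (f : Ω → A) (a : A) :
    0 ≤ prEq μ f a := by
  refine Finset.sum_nonneg fun ω _ => ?_
  split_ifs with h
  · exact hμ ω
  · exact le_rfl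

lemma prEq_le_map {μ : Ω → ℝ} (hμ : ∀ ω, 0 ≤ μ ω) {A B : Type} (f : Ω → A) (e : A → B)
    (a : A) : prEq μ f a ≤ prEq μ (fun ω => e (f ω)) (e a) := by
  refine Finset.sum_le_sum fun ω _ => ?_
  split_ifs with h1 h2
  · exact le_rfl
  · exact absurd (congrArg e h1) h2
  · exact hμ ω
  · exact le_rfl

lemma prEq_comp_inj (μ : Ω → ℝ) {A B : Type} (f : Ω → A) (e : A → B)
    (he : Function.Injective e) (a : A) :
    prEq μ (fun ω => e (f ω)) (e a) = prEq μ f a := by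
  unfold prEq
  exact Finset.sum_congr rfl fun ω _ => by simp [he.eq_iff]

lemma sum_prEq_snd (μ : Ω → ℝ) {A B : Type} [Fintype B] (F : Ω → A) (G : Ω → B) (p : A) :
    ∑ b : B, prEq μ (fun ω => (F ω, G ω)) (p, b) = prEq μ F p := by
  unfold prEq
  rw [Finset.sum_comm]
  refine Finset.sum_congr rfl fun ω _ => ?_
  by_cases h : F ω = p <;> simp [Prod.ext_iff, h]

lemma sum_prEq_fst (μ : Ω → ℝ) {A B : Type} [Fintype A] (F : Ω → A) (G : Ω → B) (q : B) :
    ∑ a : A, prEq μ (fun ω => (F ω, G ω)) (a, q) = prEq μ G q := by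
  unfold prEq
  rw [Finset.sum_comm]
  refine Finset.sum_congr rfl fun ω _ => ?_
  by_cases h : G ω = q <;> simp [Prod.ext_iff, h]

lemma prEq_pair_eq_zero_of_not_mem_right (μ : Ω → ℝ) {A B : Type}
    (f : Ω → A) (g : Ω → B) (a : A) {b : B} (hb : b ∉ Finset.univ.image g) :
    prEq μ (fun ω => (f ω, g ω)) (a, b) = 0 := by
  refine Finset.sum_eq_zero fun ω _ => ?_
  rw [if_neg]
  intro h
  exact hb (Finset.mem_image.2 ⟨ω, Finset.mem_univ ω, (Prod.ext_iff.1 h).2⟩)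

lemma prEq_pair_eq_zero_of_not_mem_left (μ : Ω → ℝ) {A B : Type}
    (f : Ω → A) (g : Ω → B) {a : A} (ha : a ∉ Finset.univ.image f) (b : B) :
    prEq μ (fun ω => (f ω, g ω)) (a, b) = 0 := by
  refine Finset.sum_eq_zero fun ω _ => ?_
  rw [if_neg]
  intro h
  exact ha (Finset.mem_image.2 ⟨ω, Finset.mem_univ ω, (Prod.ext_iff.1 h).1⟩)

/-- `mutInfo` as a sum over the full value types. -/
lemma mutInfo_eq_univ (μ : Ω → ℝ) {A B : Type} [Fintype A] [Fintype B]
    (f : Ω → A) (g : Ω → B) :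
    mutInfo μ f g = ∑ a : A, ∑ b : B,
      prEq μ (fun ω => (f ω, g ω)) (a, b) *
        Real.log (prEq μ (fun ω => (f ω, g ω)) (a, b) / (prEq μ f a * prEq μ g b)) := by
  unfold mutInfo
  rw [show (∑ a ∈ Finset.univ.image f, ∑ b ∈ Finset.univ.image g,
      prEq μ (fun ω => (f ω, g ω)) (a, b) *
        Real.log (prEq μ (fun ω => (f ω, g ω)) (a, b) / (prEq μ f a * prEq μ g b))) =
      ∑ a ∈ Finset.univ.image f, ∑ b : B,
      prEq μ (fun ω => (f ω, g ω)) (a, b) *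
        Real.log (prEq μ (fun ω => (f ω, g ω)) (a, b) / (prEq μ f a * prEq μ g b)) from
    Finset.sum_congr rfl fun a _ => Finset.sum_subset (Finset.subset_univ _)
      (fun b _ hb => by rw [prEq_pair_eq_zero_of_not_mem_right μ f g a hb, zero_mul])]
  exact Finset.sum_subset (Finset.subset_univ _) fun a _ ha =>
    Finset.sum_eq_zero fun b _ => by
      rw [prEq_pair_eq_zero_of_not_mem_left μ f g ha b, zero_mul]

/-- log-sum inequality. -/
lemma logSum {ι : Type} (s : Finset ι) (a b : ι → ℝ)
    (ha : ∀ i ∈ s, 0 ≤ a i) (hb : ∀ i ∈ s, 0 ≤ b i)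
    (hab : ∀ i ∈ s, b i = 0 → a i = 0) :
    (∑ i ∈ s, a i) * Real.log ((∑ i ∈ s, a i) / (∑ i ∈ s, b i)) ≤
      ∑ i ∈ s, a i * Real.log (a i / b i) := by
  set A := ∑ i ∈ s, a i with hA
  set B := ∑ i ∈ s, b i with hB
  by_cases hB0 : B = 0
  · have hb0 : ∀ i ∈ s, b i = 0 := (Finset.sum_eq_zero_iff_of_nonneg hb).1 hB0
    have ha0 : ∀ i ∈ s, a i = 0 := fun i hi => hab i hi (hb0 i hi)
    have hA0 : A = 0 := Finset.sum_eq_zero ha0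
    rw [hA0, zero_mul]
    exact Finset.sum_nonneg fun i hi => by rw [ha0 i hi, zero_mul]
  · have hBpos : 0 < B := lt_of_le_of_ne (Finset.sum_nonneg hb) (Ne.symm hB0)
    have key := Real.convexOn_mul_log.map_centerMass_le (t := s) (w := b)
      (p := fun i => a i / b i) hb (hB ▸ hBpos)
      (fun i hi => div_nonneg (ha i hi) (hb i hi))
    have h1 : ∑ i ∈ s, b i • (a i / b i) = A := by
      rw [hA]
      refine Finset.sum_congr rfl fun i hi => ?_
      rcases eq_or_ne (b i) 0 with h | h
      · rw [h, hab i hi h, zero_smul]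
      · rw [smul_eq_mul, mul_div_cancel₀ _ h]
    have h2 : ∑ i ∈ s, b i • ((a i / b i) * Real.log (a i / b i)) =
        ∑ i ∈ s, a i * Real.log (a i / b i) := by
      refine Finset.sum_congr rfl fun i hi => ?_
      rcases eq_or_ne (b i) 0 with h | h
      · rw [h, hab i hi h, zero_smul, zero_mul]
      · rw [smul_eq_mul, ← mul_assoc, mul_div_cancel₀ _ h]
    rw [Finset.centerMass, Finset.centerMass, ← hB, h1] at key
    simp only [smul_eq_mul, Function.comp] at key
    rw [show ∑ x ∈ s, b x * (a x / b x * Real.log (a x / b x)) =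
        ∑ i ∈ s, a i * Real.log (a i / b i) from by
      simpa only [smul_eq_mul] using h2] at key
    have h3 : B⁻¹ * A = A / B := by rw [div_eq_inv_mul]
    rw [h3] at key
    have := mul_le_mul_of_nonneg_left key (le_of_lt hBpos)
    calc A * Real.log (A / B) = B * (A / B * Real.log (A / B)) := by
          field_simp
      _ ≤ B * (B⁻¹ * ∑ i ∈ s, a i * Real.log (a i / b i)) := this
      _ = ∑ i ∈ s, a i * Real.log (a i / b i) := by field_simp

/-- Data-processing-type monotonicity: `I(f;h) ≤ I((f,g);h)`. -/
lemma mutInfo_le_pair {μ : Ω → ℝ} (hμ : ∀ ω, 0 ≤ μ ω)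
    {A B C : Type} [Fintype A] [Fintype B] [Fintype C]
    (f : Ω → A) (g : Ω → B) (h : Ω → C) :
    mutInfo μ f h ≤ mutInfo μ (fun ω => (f ω, g ω)) h := by
  rw [mutInfo_eq_univ, mutInfo_eq_univ, Fintype.sum_prod_type]
  refine Finset.sum_le_sum fun a _ => ?_
  rw [Finset.sum_comm]
  refine Finset.sum_le_sum fun c _ => ?_
  have he : Function.Injective (fun x : (A × C) × B => ((x.1.1, x.2), x.1.2)) := by
    intro x y hxy
    simp only [Prod.ext_iff] at hxy ⊢
    exact ⟨⟨hxy.1.1, hxy.2⟩, hxy.1.2⟩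
  have hnum : ∑ b : B, prEq μ (fun ω => ((f ω, g ω), h ω)) ((a, b), c) =
      prEq μ (fun ω => (f ω, h ω)) (a, c) := by
    calc ∑ b : B, prEq μ (fun ω => ((f ω, g ω), h ω)) ((a, b), c)
        = ∑ b : B, prEq μ (fun ω => ((f ω, h ω), g ω)) ((a, c), b) := by
          refine Finset.sum_congr rfl fun b _ => ?_
          simpa using (prEq_comp_inj μ (fun ω => ((f ω, h ω), g ω))
            (fun x => ((x.1.1, x.2), x.1.2)) he ((a, c), b))
      _ = prEq μ (fun ω => (f ω, h ω)) (a, c) :=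
          sum_prEq_snd μ (fun ω => (f ω, h ω)) g (a, c)
  have hden : ∑ b : B, prEq μ (fun ω => (f ω, g ω)) (a, b) * prEq μ h c =
      prEq μ f a * prEq μ h c := by
    rw [← Finset.sum_mul, sum_prEq_snd μ f g a]
  have key := logSum Finset.univ
    (fun b => prEq μ (fun ω => ((f ω, g ω), h ω)) ((a, b), c))
    (fun b => prEq μ (fun ω => (f ω, g ω)) (a, b) * prEq μ h c)
    (fun b _ => prEq_nonneg hμ _ _)
    (fun b _ => mul_nonneg (prEq_nonneg hμ _ _) (prEq_nonneg hμ _ _))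
    (fun b _ hb0 => by
      rcases mul_eq_zero.1 hb0 with h0 | h0
      · refine le_antisymm ?_ (prEq_nonneg hμ _ _)
        have := prEq_le_map hμ (fun ω => ((f ω, g ω), h ω)) Prod.fst ((a, b), c)
        calc prEq μ (fun ω => ((f ω, g ω), h ω)) ((a, b), c)
            ≤ prEq μ (fun ω => (f ω, g ω)) (a, b) := this
          _ = 0 := h0
      · refine le_antisymm ?_ (prEq_nonneg hμ _ _)
        have := prEq_le_map hμ (fun ω => ((f ω, g ω), h ω)) Prod.snd ((a, b), c)
        calc prEq μ (fun ω => ((f ω, g ω), h ω)) ((a, b), c)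
            ≤ prEq μ h c := this
          _ = 0 := h0)
  rw [hnum, hden] at key
  exact key

/-- If `f − g − h` is a Markov chain then `I((f,g);h) = I(g;h)`. -/
lemma mutInfo_pair_eq {μ : Ω → ℝ} (hμ : ∀ ω, 0 ≤ μ ω)
    {A B C : Type} [Fintype A] [Fintype B] [Fintype C]
    (f : Ω → A) (g : Ω → B) (h : Ω → C)
    (fact : MarkovChain μ f g h) :
    mutInfo μ (fun ω => (f ω, g ω)) h = mutInfo μ g h := by
  rw [mutInfo_eq_univ, mutInfo_eq_univ, Fintype.sum_prod_type, Finset.sum_comm]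
  refine Finset.sum_congr rfl fun b _ => ?_
  rw [Finset.sum_comm]
  refine Finset.sum_congr rfl fun c _ => ?_
  have he2 : Function.Injective (fun x : A × B × C => ((x.1, x.2.1), x.2.2)) := by
    intro x y hxy
    simp only [Prod.ext_iff] at hxy ⊢
    exact ⟨hxy.1.1, hxy.1.2, hxy.2⟩
  have hconv : ∀ a, prEq μ (fun ω => ((f ω, g ω), h ω)) ((a, b), c) =
      prEq μ (fun ω => (f ω, g ω, h ω)) (a, b, c) := fun a => by
    simpa using prEq_comp_inj μ (fun ω => (f ω, g ω, h ω))
      (fun x => ((x.1, x.2.1), x.2.2)) he2 (a, b, c)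
  calc ∑ a : A, prEq μ (fun ω => ((f ω, g ω), h ω)) ((a, b), c) *
        Real.log (prEq μ (fun ω => ((f ω, g ω), h ω)) ((a, b), c) /
          (prEq μ (fun ω => (f ω, g ω)) (a, b) * prEq μ h c))
      = ∑ a : A, prEq μ (fun ω => (f ω, g ω, h ω)) (a, b, c) *
          Real.log (prEq μ (fun ω => (g ω, h ω)) (b, c) / (prEq μ g b * prEq μ h c)) := by
        refine Finset.sum_congr rfl fun a _ => ?_
        rw [hconv a]
        rcases eq_or_ne (prEq μ (fun ω => (f ω, g ω)) (a, b)) 0 with hq | hq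
        · have ht : prEq μ (fun ω => (f ω, g ω, h ω)) (a, b, c) = 0 := by
            refine le_antisymm ?_ (prEq_nonneg hμ _ _)
            have h1 : prEq μ (fun ω => (f ω, g ω, h ω)) (a, b, c) ≤
                prEq μ (fun ω => (f ω, g ω)) (a, b) :=
              prEq_le_map hμ (fun ω => (f ω, g ω, h ω)) (fun x => (x.1, x.2.1)) (a, b, c)
            exact h1.trans (le_of_eq hq)
          rw [ht, zero_mul, zero_mul]
        · congr 2
          have hpg : prEq μ g b ≠ 0 := by
            have h1 : prEq μ (fun ω => (f ω, g ω)) (a, b) ≤ prEq μ g b :=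
              prEq_le_map hμ (fun ω => (f ω, g ω)) Prod.snd (a, b)
            intro h0
            exact hq (le_antisymm (h0 ▸ h1) (prEq_nonneg hμ _ _))
          rcases eq_or_ne (prEq μ h c) 0 with hc0 | hc0
          · rw [hc0, mul_zero, mul_zero, div_zero, div_zero]

          · rw [div_eq_div_iff (mul_ne_zero hq hc0) (mul_ne_zero hpg hc0)]
            have hf := fact a b c
            linear_combination prEq μ h c * hf
    _ = (∑ a : A, prEq μ (fun ω => (f ω, g ω, h ω)) (a, b, c)) *
          Real.log (prEq μ (fun ω => (g ω, h ω)) (b, c) / (prEq μ g b * prEq μ h c)) :=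
        (Finset.sum_mul _ _ _).symm
    _ = prEq μ (fun ω => (g ω, h ω)) (b, c) *
          Real.log (prEq μ (fun ω => (g ω, h ω)) (b, c) / (prEq μ g b * prEq μ h c)) := by
        rw [sum_prEq_fst μ f (fun ω => (g ω, h ω)) (b, c)]

/-- Marginalising the first half of the last variable of a Markov chain. -/
lemma markov_marg_right {A B C D : Type} [Fintype C] (μ : Ω → ℝ)
    (f : Ω → A) (g : Ω → B) (h : Ω → C) (k : Ω → D)
    (hc : MarkovChain μ f g (fun ω => (h ω, k ω))) :
    MarkovChain μ f g k := by
  intro a b d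
  have H : ∑ c : C, (prEq μ (fun ω => (f ω, g ω, (h ω, k ω))) (a, b, (c, d)) * prEq μ g b) =
      ∑ c : C, (prEq μ (fun ω => (f ω, g ω)) (a, b) *
        prEq μ (fun ω => (g ω, (h ω, k ω))) (b, (c, d))) :=
    Finset.sum_congr rfl fun c _ => hc a b (c, d)
  rw [← Finset.sum_mul, ← Finset.mul_sum] at H
  have hinj1 : Function.Injective
      (fun x : (A × B × D) × C => (x.1.1, x.1.2.1, (x.2, x.1.2.2))) := by
    intro x y hxy
    simp only [Prod.ext_iff] at hxy ⊢
    exact ⟨⟨hxy.1, hxy.2.1, hxy.2.2.2⟩, hxy.2.2.1⟩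
  have hinj2 : Function.Injective (fun x : (B × D) × C => (x.1.1, (x.2, x.1.2))) := by
    intro x y hxy
    simp only [Prod.ext_iff] at hxy ⊢
    exact ⟨⟨hxy.1, hxy.2.2⟩, hxy.2.1⟩
  have e1 : ∑ c : C, prEq μ (fun ω => (f ω, g ω, (h ω, k ω))) (a, b, (c, d)) =
      prEq μ (fun ω => (f ω, g ω, k ω)) (a, b, d) := by
    calc ∑ c : C, prEq μ (fun ω => (f ω, g ω, (h ω, k ω))) (a, b, (c, d))
        = ∑ c : C, prEq μ (fun ω => ((f ω, g ω, k ω), h ω)) ((a, b, d), c) := by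
          refine Finset.sum_congr rfl fun c _ => ?_
          simpa using (prEq_comp_inj μ (fun ω => ((f ω, g ω, k ω), h ω))
            (fun x => (x.1.1, x.1.2.1, (x.2, x.1.2.2))) hinj1 ((a, b, d), c))
      _ = prEq μ (fun ω => (f ω, g ω, k ω)) (a, b, d) :=
          sum_prEq_snd μ (fun ω => (f ω, g ω, k ω)) h (a, b, d)
  have e2 : ∑ c : C, prEq μ (fun ω => (g ω, (h ω, k ω))) (b, (c, d)) =
      prEq μ (fun ω => (g ω, k ω)) (b, d) := by
    calc ∑ c : C, prEq μ (fun ω => (g ω, (h ω, k ω))) (b, (c, d))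
        = ∑ c : C, prEq μ (fun ω => ((g ω, k ω), h ω)) ((b, d), c) := by
          refine Finset.sum_congr rfl fun c _ => ?_
          simpa using (prEq_comp_inj μ (fun ω => ((g ω, k ω), h ω))
            (fun x => (x.1.1, (x.2, x.1.2))) hinj2 ((b, d), c))
      _ = prEq μ (fun ω => (g ω, k ω)) (b, d) :=
          sum_prEq_snd μ (fun ω => (g ω, k ω)) h (b, d)
  rw [e1, e2] at H
  exact H

/-- Marginalising the first half of the first variable of a Markov chain. -/
lemma markov_marg_left {A B C D : Type} [Fintype A] (μ : Ω → ℝ)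
    (f : Ω → A) (g : Ω → B) (h : Ω → C) (k : Ω → D)
    (hc : MarkovChain μ (fun ω => (f ω, g ω)) h k) :
    MarkovChain μ g h k := by
  intro b c d
  have H : ∑ a : A, (prEq μ (fun ω => ((f ω, g ω), h ω, k ω)) ((a, b), c, d) * prEq μ h c) =
      ∑ a : A, (prEq μ (fun ω => ((f ω, g ω), h ω)) ((a, b), c) *
        prEq μ (fun ω => (h ω, k ω)) (c, d)) :=
    Finset.sum_congr rfl fun a _ => hc (a, b) c d
  rw [← Finset.sum_mul, ← Finset.sum_mul] at H
  have hinj1 : Function.Injective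
      (fun x : (B × C × D) × A => ((x.2, x.1.1), x.1.2.1, x.1.2.2)) := by
    intro x y hxy
    simp only [Prod.ext_iff] at hxy ⊢
    exact ⟨⟨hxy.1.2, hxy.2.1, hxy.2.2⟩, hxy.1.1⟩
  have hinj2 : Function.Injective (fun x : (B × C) × A => ((x.2, x.1.1), x.1.2)) := by
    intro x y hxy
    simp only [Prod.ext_iff] at hxy ⊢
    exact ⟨⟨hxy.1.2, hxy.2⟩, hxy.1.1⟩
  have e1 : ∑ a : A, prEq μ (fun ω => ((f ω, g ω), h ω, k ω)) ((a, b), c, d) =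
      prEq μ (fun ω => (g ω, h ω, k ω)) (b, c, d) := by
    calc ∑ a : A, prEq μ (fun ω => ((f ω, g ω), h ω, k ω)) ((a, b), c, d)
        = ∑ a : A, prEq μ (fun ω => ((g ω, h ω, k ω), f ω)) ((b, c, d), a) := by
          refine Finset.sum_congr rfl fun a _ => ?_
          simpa using (prEq_comp_inj μ (fun ω => ((g ω, h ω, k ω), f ω))
            (fun x => ((x.2, x.1.1), x.1.2.1, x.1.2.2)) hinj1 ((b, c, d), a))
      _ = prEq μ (fun ω => (g ω, h ω, k ω)) (b, c, d) :=
          sum_prEq_snd μ (fun ω => (g ω, h ω, k ω)) f (b, c, d)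
  have e2 : ∑ a : A, prEq μ (fun ω => ((f ω, g ω), h ω)) ((a, b), c) =
      prEq μ (fun ω => (g ω, h ω)) (b, c) := by
    calc ∑ a : A, prEq μ (fun ω => ((f ω, g ω), h ω)) ((a, b), c)
        = ∑ a : A, prEq μ (fun ω => ((g ω, h ω), f ω)) ((b, c), a) := by
          refine Finset.sum_congr rfl fun a _ => ?_
          simpa using (prEq_comp_inj μ (fun ω => ((g ω, h ω), f ω))
            (fun x => ((x.2, x.1.1), x.1.2)) hinj2 ((b, c), a))
      _ = prEq μ (fun ω => (g ω, h ω)) (b, c) :=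
          sum_prEq_snd μ (fun ω => (g ω, h ω)) f (b, c)
  rw [e1, e2] at H
  exact H

end Aux

theorem psi_positive_sufficient_for_emergence
    {Ω : Type} [Fintype Ω] (μ : Ω → ℝ) (hμ : IsPMF μ)
    {n : ℕ} {𝓧 𝓨 : Fin n → Type} [∀ i, Fintype (𝓧 i)] [∀ i, Fintype (𝓨 i)]
    (X : Ω → ∀ i, 𝓧 i) (X' : Ω → ∀ i, 𝓨 i)
    {𝓥 𝓤 : Type} [Fintype 𝓥] [Fintype 𝓤] (V : Ω → 𝓥) (V' : Ω → 𝓤)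
    (k : ℕ)
    (hchain₁ : MarkovChain μ V X (fun ω => (X' ω, V' ω)))
    (hchain₂ : MarkovChain μ (fun ω => (V ω, X ω)) X' V')
    (Syn : (T : Type) → (Ω → T) → ℝ)
    (hwms : ∀ (T : Type) (Y : Ω → T),
      mutInfo μ X Y - ∑ α ∈ kSets n k, mutInfo μ (subvec X α) Y ≤ Syn T Y)
    (htdpi : ∀ (T U : Type) (Y : Ω → T) (Z : Ω → U),
      MarkovChain μ X Y Z → Syn U Z ≤ Syn T Y) :
    mutInfo μ V V' - ∑ α ∈ kSets n k, mutInfo μ (subvec X α) V'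
        ≤ Syn (∀ i, 𝓨 i) X' ∧
      (0 < mutInfo μ V V' - ∑ α ∈ kSets n k, mutInfo μ (subvec X α) V' →
        0 < Syn (∀ i, 𝓨 i) X') := by
  obtain ⟨hμ0, -⟩ := hμ
  have fact₁ : MarkovChain μ V X V' := markov_marg_right μ V X X' V' hchain₁
  have fact₂ : MarkovChain μ X X' V' := markov_marg_left μ V X X' V' hchain₂
  have hVle : mutInfo μ V V' ≤ mutInfo μ X V' :=
    (mutInfo_le_pair hμ0 V X V').trans (le_of_eq (mutInfo_pair_eq hμ0 V X V' fact₁))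
  have h2 := hwms 𝓤 V'
  have h3 := htdpi (∀ i, 𝓨 i) 𝓤 X' V' fact₂
  refine ⟨by linarith, fun hpos => by linarith⟩
end
end

section
/- Let n ≥ 1 and let I_∂ : 𝒜_{n+1} → ℝ and Ī_∂ : 𝒜_n → ℝ satisfy I_∂(f(𝜶)) = Ī_∂(𝜶) for all 𝜶 ∈ 𝒜_n and I_∂({{n+1}}) = 0. Then for every k ≥ 1, Σ_{𝜸 ∈ U_{n+1}^(k)({n+1})} I_∂(𝜸) = Σ_{𝜶 ∈ S_n^(k)} Ī_∂(𝜶). (Interpreting I_∂ as the partial-information atoms of the (n+1)-source system obtained by appending the whole source vector X as an extra source X^{n+1} = X, this is the identity Un^(k)(X^{n+1};Y|X) = Syn^(k)(X;Y) of the paper's Lemma 3.) -/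
noncomputable section

open scoped BigOperators

attribute [local instance] Classical.propDecidable

/-- The antichains of nonempty subsets of `[n] = {1,…,n}` (modelled as `Fin n`):
nonempty collections of nonempty subsets of `[n]`, no element of which is contained
in another distinct element. -/
def Antichains (n : ℕ) : Set (Finset (Finset (Fin n))) :=
  {A | A.Nonempty ∧ (∀ a ∈ A, a.Nonempty) ∧ ∀ a ∈ A, ∀ b ∈ A, a ≠ b → ¬a ⊆ b}

/-- The partial order on antichains: `A ⪯ B` iff every `b ∈ B` contains some `a ∈ A`. -/
def achLE {n : ℕ} (A B : Finset (Finset (Fin n))) : Prop :=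
  ∀ b ∈ B, ∃ a ∈ A, a ⊆ b

/-- Strict order on antichains: `A ≺ B` iff `A ⪯ B` and not `B ⪯ A`. -/
def achLT {n : ℕ} (A B : Finset (Finset (Fin n))) : Prop :=
  achLE A B ∧ ¬achLE B A

/-- `S_n⁽ᵏ⁾`: the antichains all of whose elements have cardinality `> k`. -/
def Sset (n k : ℕ) : Set (Finset (Finset (Fin n))) :=
  {A | A ∈ Antichains n ∧ ∀ a ∈ A, k < a.card}

/-- `R_n⁽ᵏ⁾`: the antichains with at least two distinct elements of cardinality `≤ k`. -/
def Rset (n k : ℕ) : Set (Finset (Finset (Fin n))) :=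
  {A | A ∈ Antichains n ∧ ∃ a ∈ A, ∃ b ∈ A, a ≠ b ∧ a.card ≤ k ∧ b.card ≤ k}

/-- `U_n⁽ᵏ⁾(β)`: the antichains containing `β` in which every element other than `β`
has cardinality `> k`. -/
def Uset (n k : ℕ) (β : Finset (Fin n)) : Set (Finset (Finset (Fin n))) :=
  {A | A ∈ Antichains n ∧ β ∈ A ∧ ∀ a ∈ A, a ≠ β → k < a.card}

/-- A subset of `[n]` viewed as a subset of `[n+1]`. -/
def liftSet {n : ℕ} (a : Finset (Fin n)) : Finset (Fin (n + 1)) :=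
  a.map ⟨Fin.castSucc, Fin.castSucc_injective n⟩

/-- The map `f : 𝒜_n → 𝒜_{n+1}`, `f(𝜶) = 𝜶 ∪ {{n+1}}` (the extra element `n+1` of
`[n+1]` is modelled by `Fin.last n`). -/
def fmap {n : ℕ} (A : Finset (Finset (Fin n))) : Finset (Finset (Fin (n + 1))) :=
  A.image liftSet ∪ {({Fin.last n} : Finset (Fin (n + 1)))}

/-!
STATEMENT 15.  If `I_∂ : 𝒜_{n+1} → ℝ` and `Ī_∂ : 𝒜_n → ℝ` satisfy
`I_∂(f(𝜶)) = Ī_∂(𝜶)` for all `𝜶 ∈ 𝒜_n` and `I_∂({{n+1}}) = 0`, then for every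
`k ≥ 1`, `Σ_{𝜸 ∈ U_{n+1}⁽ᵏ⁾({n+1})} I_∂(𝜸) = Σ_{𝜶 ∈ S_n⁽ᵏ⁾} Ī_∂(𝜶)`
(the identity `Un⁽ᵏ⁾(Xⁿ⁺¹;Y|X) = Syn⁽ᵏ⁾(X;Y)` of the paper's Lemma 3, where the extra
source `Xⁿ⁺¹ = X` is the whole source vector).
-/

-- Auxiliary lemmas

lemma last_not_mem_liftSet {n : ℕ} (a : Finset (Fin n)) :
    Fin.last n ∉ liftSet a := by
  intro h
  rcases Finset.mem_map.mp h with ⟨x, _, hx⟩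
  exact absurd hx (Fin.castSucc_lt_last x).ne

lemma liftSet_ne_singleton_last {n : ℕ} (a : Finset (Fin n)) :
    liftSet a ≠ ({Fin.last n} : Finset (Fin (n + 1))) := by
  intro h
  have : Fin.last n ∈ liftSet a := by rw [h]; exact Finset.mem_singleton_self _
  exact last_not_mem_liftSet a this

lemma liftSet_card {n : ℕ} (a : Finset (Fin n)) : (liftSet a).card = a.card :=
  Finset.card_map _

lemma liftSet_subset_iff {n : ℕ} {a b : Finset (Fin n)} :
    liftSet a ⊆ liftSet b ↔ a ⊆ b := Finset.map_subset_map

lemma liftSet_injective {n : ℕ} : Function.Injective (liftSet (n := n)) :=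
  Finset.map_injective _

/-- Inverse of liftSet on sets avoiding `Fin.last n` (needs `1 ≤ n`). -/
def unlift (n : ℕ) (hn : 1 ≤ n) (a : Finset (Fin (n + 1))) : Finset (Fin n) :=
  a.image (fun x => (⟨min x.val (n - 1), by omega⟩ : Fin n))

lemma lift_unlift {n : ℕ} (hn : 1 ≤ n) {a : Finset (Fin (n + 1))}
    (ha : Fin.last n ∉ a) : liftSet (unlift n hn a) = a := by
  ext y
  simp only [liftSet, unlift, Finset.mem_map, Finset.mem_image,
    Function.Embedding.coeFn_mk]
  constructor
  · rintro ⟨x, ⟨z, hz, rfl⟩, rfl⟩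
    have hzn : z.val < n := by
      rcases lt_or_eq_of_le (Nat.lt_succ_iff.mp z.isLt) with h | h
      · exact h
      · exact absurd (Fin.ext h : z = Fin.last n) (fun e => ha (e ▸ hz))
    have : min z.val (n - 1) = z.val := by omega
    have : Fin.castSucc (⟨min z.val (n - 1), by omega⟩ : Fin n) = z := by
      apply Fin.ext; simpa [Fin.castSucc] using this
    rwa [this]
  · intro hy
    have hyn : y.val < n := by
      rcases lt_or_eq_of_le (Nat.lt_succ_iff.mp y.isLt) with h | h
      · exact h
      · exact absurd (Fin.ext h : y = Fin.last n) (fun e => ha (e ▸ hy))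
    refine ⟨⟨min y.val (n - 1), by omega⟩, ⟨y, hy, rfl⟩, ?_⟩
    apply Fin.ext
    simp [Fin.castSucc]
    omega

lemma fmap_injective {n : ℕ} : Function.Injective (fmap (n := n)) := by
  intro A B h
  have key : ∀ (X Y : Finset (Finset (Fin n))), fmap X = fmap Y → X ⊆ Y := by
    intro X Y hXY a ha
    have : liftSet a ∈ fmap Y := by
      rw [← hXY]; exact Finset.mem_union_left _ (Finset.mem_image_of_mem _ ha)
    rcases Finset.mem_union.mp this with h' | h'
    · rcases Finset.mem_image.mp h' with ⟨b, hb, hba⟩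
      rwa [liftSet_injective hba] at hb
    · exact absurd (Finset.mem_singleton.mp h') (liftSet_ne_singleton_last a)
  exact Finset.Subset.antisymm (key A B h) (key B A h.symm)

theorem unique_info_of_whole_equals_synergy (n : ℕ) (hn : 1 ≤ n)
    (Ipart : Finset (Finset (Fin (n + 1))) → ℝ)
    (Ipartb : Finset (Finset (Fin n)) → ℝ)
    (hagree : ∀ A ∈ Antichains n, Ipart (fmap A) = Ipartb A)
    (hlast : Ipart ({({Fin.last n} : Finset (Fin (n + 1)))} :
      Finset (Finset (Fin (n + 1)))) = 0)
    (k : ℕ) (hk : 1 ≤ k) :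
    ∑ C ∈ Finset.univ.filter
        (fun C => C ∈ Uset (n + 1) k ({Fin.last n} : Finset (Fin (n + 1)))), Ipart C
      = ∑ A ∈ Finset.univ.filter (fun A => A ∈ Sset n k), Ipartb A := by
  classical
  set β : Finset (Fin (n + 1)) := {Fin.last n} with hβ
  -- The U-set equals insert {β} (image fmap S-set)
  have hUS : Finset.univ.filter (fun C => C ∈ Uset (n + 1) k β)
      = insert ({β} : Finset (Finset (Fin (n + 1))))
          ((Finset.univ.filter (fun A => A ∈ Sset n k)).image fmap) := by
    ext C
    simp only [Finset.mem_filter, Finset.mem_univ, true_and, Finset.mem_insert,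
      Finset.mem_image]
    constructor
    · rintro ⟨⟨hCne, hCnonempty, hCanti⟩, hβC, hCcard⟩
      by_cases hC : C = {β}
      · exact Or.inl hC
      · right
        -- every a ∈ C with a ≠ β avoids Fin.last n
        have hnolast : ∀ a ∈ C, a ≠ β → Fin.last n ∉ a := by
          intro a ha hane hla
          exact hCanti β hβC a ha (Ne.symm hane) (by
            intro x hx
            rw [hβ, Finset.mem_singleton] at hx
            rwa [hx])
        set A : Finset (Finset (Fin n)) := (C.erase β).image (unlift n hn) with hA
        have hliftA : ∀ a ∈ C.erase β, liftSet (unlift n hn a) = a := by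
          intro a ha
          exact lift_unlift hn (hnolast a (Finset.mem_of_mem_erase ha)
            (Finset.ne_of_mem_erase ha))
        have himg : A.image liftSet = C.erase β := by
          rw [hA, Finset.image_image]
          apply Finset.image_congr (g := id) ?_ |>.trans (Finset.image_id)
          intro a ha
          exact hliftA a ha
        have hfmapA : fmap A = C := by
          rw [fmap, himg]
          rw [Finset.union_comm]
          simpa [hβ] using Finset.insert_erase hβC
        -- A is in the S-set
        have hmemA : ∀ a ∈ A, ∃ c ∈ C, c ≠ β ∧ liftSet a = c := by
          intro a ha
          rcases Finset.mem_image.mp ha with ⟨c, hc, rfl⟩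
          exact ⟨c, Finset.mem_of_mem_erase hc, Finset.ne_of_mem_erase hc,
            hliftA c hc⟩
        refine ⟨A, ⟨⟨?_, ?_, ?_⟩, ?_⟩, hfmapA⟩
        · -- A nonempty
          have : ∃ c ∈ C, c ≠ β := by
            by_contra hcon
            push_neg at hcon
            apply hC
            apply Finset.Subset.antisymm
            · intro c hc; rw [Finset.mem_singleton]; exact hcon c hc
            · intro c hc; rw [Finset.mem_singleton] at hc; rwa [hc]
          rcases this with ⟨c, hc, hcne⟩
          exact ⟨unlift n hn c, Finset.mem_image_of_mem _
            (Finset.mem_erase.mpr ⟨hcne, hc⟩)⟩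
        · -- elements nonempty
          intro a ha
          rcases hmemA a ha with ⟨c, hc, _, hlc⟩
          have := hCnonempty c hc
          rw [← hlc] at this
          rcases this with ⟨y, hy⟩
          rcases Finset.mem_map.mp hy with ⟨x, hx, _⟩
          exact ⟨x, hx⟩
        · -- antichain
          intro a ha b hb hab hsub
          rcases hmemA a ha with ⟨c, hc, _, hlc⟩
          rcases hmemA b hb with ⟨d, hd, _, hld⟩
          have hcd : c ≠ d := by
            intro e; apply hab
            apply liftSet_injective; rw [hlc, hld, e]
          apply hCanti c hc d hd hcd
          rw [← hlc, ← hld]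
          exact liftSet_subset_iff.mpr hsub
        · -- cards
          intro a ha
          rcases hmemA a ha with ⟨c, hc, hcne, hlc⟩
          have := hCcard c hc hcne
          rwa [← hlc, liftSet_card] at this
    · rintro (rfl | ⟨A, ⟨⟨hAne, hAnonempty, hAanti⟩, hAcard⟩, rfl⟩)
      · refine ⟨⟨⟨β, Finset.mem_singleton_self _⟩, ?_, ?_⟩, Finset.mem_singleton_self _, ?_⟩
        · intro a ha
          rw [Finset.mem_singleton] at ha
          rw [ha, hβ]
          exact ⟨Fin.last n, Finset.mem_singleton_self _⟩
        · intro a ha b hb hab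
          rw [Finset.mem_singleton] at ha hb
          exact absurd (ha.trans hb.symm) hab
        · intro a ha hane
          rw [Finset.mem_singleton] at ha
          exact absurd ha hane
      · have hβmem : β ∈ fmap A := Finset.mem_union_right _ (Finset.mem_singleton_self _)
        have hmem : ∀ c ∈ fmap A, c ≠ β → ∃ a ∈ A, liftSet a = c := by
          intro c hc hcne
          rcases Finset.mem_union.mp hc with h' | h'
          · exact Finset.mem_image.mp h'
          · exact absurd (Finset.mem_singleton.mp h') hcne
        refine ⟨⟨⟨β, hβmem⟩, ?_, ?_⟩, hβmem, ?_⟩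
        · intro c hc
          by_cases hcne : c = β
          · rw [hcne, hβ]; exact ⟨Fin.last n, Finset.mem_singleton_self _⟩
          · rcases hmem c hc hcne with ⟨a, ha, rfl⟩
            rcases hAnonempty a ha with ⟨x, hx⟩
            exact ⟨Fin.castSucc x, Finset.mem_map_of_mem _ hx⟩
        · intro c hc d hd hcd hsub
          by_cases hcβ : c = β
          · -- β ⊆ d with d ≠ β: then last ∈ d, d = liftSet a, contradiction
            rcases hmem d hd (fun e => hcd (hcβ.trans e.symm)) with ⟨a, ha, rfl⟩
            have : Fin.last n ∈ liftSet a := hsub (by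
              rw [hcβ, hβ]; exact Finset.mem_singleton_self _)
            exact last_not_mem_liftSet a this
          · rcases hmem c hc hcβ with ⟨a, ha, rfl⟩
            by_cases hdβ : d = β
            · -- liftSet a ⊆ {last}: a nonempty, element maps to last
              rcases hAnonempty a ha with ⟨x, hx⟩
              have : Fin.castSucc x ∈ β := hdβ ▸ hsub (Finset.mem_map_of_mem _ hx)
              rw [hβ, Finset.mem_singleton] at this
              exact absurd this (Fin.castSucc_lt_last x).ne
            · rcases hmem d hd hdβ with ⟨b, hb, rfl⟩
              have hab : a ≠ b := fun e => hcd (by rw [e])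
              exact hAanti a ha b hb hab (liftSet_subset_iff.mp hsub)
        · intro c hc hcne
          rcases hmem c hc hcne with ⟨a, ha, rfl⟩
          rw [liftSet_card]
          exact hAcard a ha
  rw [hUS]
  have hnotmem : ({β} : Finset (Finset (Fin (n + 1)))) ∉
      (Finset.univ.filter (fun A => A ∈ Sset n k)).image fmap := by
    intro h
    rcases Finset.mem_image.mp h with ⟨A, hA, hfA⟩
    rcases (Finset.mem_filter.mp hA).2.1.1 with ⟨a, ha⟩
    have : liftSet a ∈ fmap A :=
      Finset.mem_union_left _ (Finset.mem_image_of_mem _ ha)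
    rw [hfA, Finset.mem_singleton] at this
    exact liftSet_ne_singleton_last a this
  rw [Finset.sum_insert hnotmem, hlast,
    Finset.sum_image (fun A _ B _ h => fmap_injective h), zero_add]
  apply Finset.sum_congr rfl
  intro A hA
  exact hagree A (Finset.mem_filter.mp hA).2.1
end
end
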